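/- If a connected (d+1)-colored graph G has a 2-bond consisting of two edges e, e' of color 0, then flipping e with e' produces two connected colored graphs G_L, G_R, and the total number of bicolored cycles containing color 0 satisfies C_0(G) = C_0(G_L) + C_0(G_R) − d. -/
import Mathlib


open scoped BigOperators

/-
A `(d+1)`-colored graph (bipartite, every vertex incident to exactly one edge of each
color `0,…,d`, with `n` white and `n` black vertices, both indexed by `Fin n`) is
encoded by a family `π : Fin (d+1) → Equiv.Perm (Fin n)`: the edge of color `c` at
the white vertex `i` joins it to the black vertex `π c i`.
-/

/-- The "transition" permutation of the white vertices obtained by following the edge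
of color `a` and coming back along the edge of color `b`.  Bicolored cycles with
colors `{a,b}` are exactly the orbits of `cTrans π a b`. -/
def cTrans {d n : ℕ} (π : Fin (d + 1) → Equiv.Perm (Fin n)) (a b : Fin (d + 1)) :
    Equiv.Perm (Fin n) :=
  (π a)⁻¹ * π b

/-- The subgroup generated by all transition permutations; its orbits on white
vertices are the connected components of the colored graph. -/
def transGroup {d n : ℕ} (π : Fin (d + 1) → Equiv.Perm (Fin n)) :
    Subgroup (Equiv.Perm (Fin n)) :=
  Subgroup.closure
    (Set.range fun p : Fin (d + 1) × Fin (d + 1) => cTrans π p.1 p.2)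

/-- A set `S` of white vertices is a nonempty, invariant, connected piece of the
colored graph `π`. -/
def ConnOn {d n : ℕ} (π : Fin (d + 1) → Equiv.Perm (Fin n))
    (S : Finset (Fin n)) : Prop :=
  S.Nonempty ∧ (∀ a b : Fin (d + 1), ∀ x ∈ S, cTrans π a b x ∈ S) ∧
    ∀ x ∈ S, ∀ y ∈ S, ∃ g ∈ transGroup π, g x = y

/-- The colored graph is connected. -/
def ColConnected {d n : ℕ} (π : Fin (d + 1) → Equiv.Perm (Fin n)) : Prop :=
  ConnOn π Finset.univ

/-- The number of cycles (orbits, fixed points included) of a permutation `σ` that are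
contained in an (invariant) set `S`. -/
def cyclesOn {n : ℕ} (σ : Equiv.Perm (Fin n)) (S : Finset (Fin n)) : ℕ :=
  (σ.cycleFactorsFinset.filter fun c => c.support ⊆ S).card +
    (S.filter fun x => σ x = x).card

/-- `C₀`, restricted to the vertex set `S`: the total number of bicolored cycles with
colors `{0,c}`, `c ∈ [1..d]`, contained in `S`. -/
def C0on {d n : ℕ} (π : Fin (d + 1) → Equiv.Perm (Fin n))
    (S : Finset (Fin n)) : ℕ :=
  ∑ c ∈ Finset.univ.filter fun c : Fin (d + 1) => c ≠ 0,
    cyclesOn (cTrans π 0 c) S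

section Aux

open Equiv Equiv.Perm Finset

set_option linter.unusedSectionVars false

namespace TwoBondAux

variable {α : Type*} [Fintype α] [DecidableEq α]

/-- The same-cycle setoid of a permutation. -/
def scs (σ : Perm α) : Setoid α :=
  ⟨σ.SameCycle, ⟨fun x => SameCycle.refl σ x, fun h => h.symm, fun h h' => h.trans h'⟩⟩

lemma mono {τ σ : Perm α} (h : ∀ p, τ.SameCycle p (σ p)) {x y : α}
    (hxy : σ.SameCycle x y) : τ.SameCycle x y := by
  obtain ⟨i, -, rfl⟩ := hxy.exists_pow_eq'
  clear hxy
  induction i with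
  | zero => simpa using SameCycle.refl τ x
  | succ n ih =>
    have hs : (σ ^ (n + 1)) x = σ ((σ ^ n) x) := by rw [pow_succ', Perm.mul_apply]
    rw [hs]
    exact ih.trans (h _)

lemma sc_invariant {σ : Perm α} (S : Finset α) (h : ∀ x ∈ S, σ x ∈ S) {x y : α}
    (hx : x ∈ S) (hxy : σ.SameCycle x y) : y ∈ S := by
  obtain ⟨i, -, rfl⟩ := hxy.exists_pow_eq'
  clear hxy
  induction i with
  | zero => simpa using hx
  | succ n ih =>
    have hs : (σ ^ (n + 1)) x = σ ((σ ^ n) x) := by rw [pow_succ', Perm.mul_apply]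
    rw [hs]
    exact h _ ih

lemma compl_invariant {σ : Perm α} {S : Finset α} (h : ∀ x ∈ S, σ x ∈ S) :
    ∀ x ∈ Sᶜ, σ x ∈ Sᶜ := by
  have himg : S.image σ = S :=
    Finset.eq_of_subset_of_card_le (Finset.image_subset_iff.2 h)
      (le_of_eq (Finset.card_image_of_injective S σ.injective).symm)
  intro x hx
  rw [Finset.mem_compl] at hx ⊢
  intro hσx
  rw [← himg] at hσx
  obtain ⟨z, hz, hzx⟩ := Finset.mem_image.1 hσx
  exact hx (σ.injective hzx ▸ hz)

lemma card_quot (σ : Perm α) :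
    Nat.card (Quotient (scs σ))
      = σ.cycleFactorsFinset.card + (univ.filter fun x => σ x = x).card := by
  classical
  set f : α → ({c // c ∈ σ.cycleFactorsFinset} ⊕ {x : α // σ x = x}) := fun x =>
    if h : σ x = x then Sum.inr ⟨x, h⟩
    else Sum.inl ⟨σ.cycleOf x, cycleOf_mem_cycleFactorsFinset_iff.2 (mem_support.2 h)⟩
    with hf
  have hresp : ∀ x y, σ.SameCycle x y → f x = f y := by
    intro x y hxy
    by_cases hx : σ x = x
    · obtain ⟨i, hi⟩ := hxy
      rw [zpow_apply_eq_self_of_apply_eq_self hx] at hi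
      subst hi; rfl
    · have hy : ¬ σ y = y := by
        intro hy
        obtain ⟨i, hi⟩ := hxy.symm
        rw [zpow_apply_eq_self_of_apply_eq_self hy] at hi
        exact hx (hi ▸ hy)
      simp only [hf, dif_neg hx, dif_neg hy]
      exact congrArg Sum.inl (Subtype.ext hxy.cycleOf_eq)
  set g : Quotient (scs σ) → _ := Quotient.lift f hresp with hg
  have hbij : Function.Bijective g := by
    constructor
    · intro q₁ q₂
      induction q₁ using Quotient.ind with | _ x => ?_
      induction q₂ using Quotient.ind with | _ y => ?_
      intro hxy
      apply Quotient.sound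
      have hxy' : f x = f y := hxy
      by_cases hx : σ x = x <;> by_cases hy : σ y = y
      · simp only [hf, dif_pos hx, dif_pos hy, Sum.inr.injEq, Subtype.mk.injEq] at hxy'
        exact hxy' ▸ SameCycle.refl σ x
      · simp only [hf, dif_pos hx, dif_neg hy] at hxy'
        exact absurd hxy' (by simp)
      · simp only [hf, dif_neg hx, dif_pos hy] at hxy'
        exact absurd hxy' (by simp)
      · simp only [hf, dif_neg hx, dif_neg hy, Sum.inl.injEq, Subtype.mk.injEq] at hxy'
        have hmem : y ∈ (σ.cycleOf x).support := by
          rw [hxy', mem_support_cycleOf_iff]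
          exact ⟨SameCycle.refl σ y, mem_support.2 hy⟩
        exact (mem_support_cycleOf_iff.1 hmem).1
    · rintro (⟨c, hc⟩ | ⟨x, hx⟩)
      · obtain ⟨hcyc, hsup⟩ := mem_cycleFactorsFinset_iff.1 hc
        obtain ⟨x, hx, -⟩ := hcyc
        have hxs : x ∈ c.support := mem_support.2 hx
        have hσx : ¬ σ x = x := by rw [← hsup x hxs]; exact hx
        refine ⟨Quotient.mk (scs σ) x, ?_⟩
        show f x = _
        rw [hf]
        simp only [dif_neg hσx]
        exact congrArg Sum.inl (Subtype.ext (cycle_is_cycleOf hxs hc).symm)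
      · refine ⟨Quotient.mk (scs σ) x, ?_⟩
        show f x = _
        rw [hf]
        simp only [dif_pos hx]
  rw [Nat.card_eq_of_bijective g hbij, Nat.card_sum, Nat.card_eq_fintype_card,
    Nat.card_eq_fintype_card, Fintype.card_coe, Fintype.card_subtype]

lemma card_quot_swap_mul (σ : Perm α) (a b : α) (hab : a ≠ b)
    (h : ¬ σ.SameCycle a b) :
    Nat.card (Quotient (scs σ)) = Nat.card (Quotient (scs (Equiv.swap a b * σ))) + 1 := by
  classical
  set τ := Equiv.swap a b * σ with hτ
  have hτapp : ∀ p, τ p = Equiv.swap a b (σ p) := fun p => rfl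
  -- a and b get merged into one τ-cycle
  have key : ∀ j : ℕ, τ.SameCycle b ((σ ^ j) b) ∨ τ.SameCycle b a := by
    intro j
    induction j with
    | zero => exact Or.inl (by simpa using SameCycle.refl τ b)
    | succ n ih =>
      rcases ih with ih | ih
      · set p := (σ ^ n) b with hp
        have hpb : σ.SameCycle b p := ⟨(n : ℤ), by simp [hp, zpow_natCast]⟩
        have hpσ : σ.SameCycle p (σ p) := ⟨1, by simp⟩
        have hσp : σ.SameCycle b (σ p) := hpb.trans hpσ
        have hpa : σ p ≠ a := fun e => h (e ▸ hσp).symm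
        by_cases hpb2 : σ p = b
        · have hτp : τ p = a := by rw [hτapp, hpb2, swap_apply_right]
          exact Or.inr (ih.trans ⟨1, by simpa using hτp⟩)
        · have hτp : τ p = (σ ^ (n + 1)) b := by
            rw [hτapp, swap_apply_of_ne_of_ne hpa hpb2, pow_succ', Perm.mul_apply]
          exact Or.inl (ih.trans ⟨1, by simpa using hτp⟩)
      · exact Or.inr ih
  have hba : τ.SameCycle b a := by
    rcases key (orderOf σ - 1) with hk | hk
    · set p := (σ ^ (orderOf σ - 1)) b with hp
      have hσp : σ p = b := by
        have h1 : orderOf σ - 1 + 1 = orderOf σ :=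
          Nat.succ_pred_eq_of_pos (orderOf_pos σ)
        have : σ p = (σ ^ (orderOf σ - 1 + 1)) b := by
          rw [pow_succ', Perm.mul_apply, hp]
        rw [this, h1, pow_orderOf_eq_one, Perm.one_apply]
      have hτp : τ p = a := by rw [hτapp, hσp, swap_apply_right]
      exact hk.trans ⟨1, by simpa using hτp⟩
    · exact hk
  have hab' : τ.SameCycle a b := hba.symm
  -- σ-same-cycle implies τ-same-cycle
  have hstep : ∀ p, τ.SameCycle p (σ p) := by
    intro p
    by_cases h1 : σ p = a
    · have hτp : τ p = b := by rw [hτapp, h1, swap_apply_left]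
      rw [h1]
      exact (show τ.SameCycle p b from ⟨1, by simpa using hτp⟩).trans hba
    · by_cases h2 : σ p = b
      · have hτp : τ p = a := by rw [hτapp, h2, swap_apply_right]
        rw [h2]
        exact (show τ.SameCycle p a from ⟨1, by simpa using hτp⟩).trans hab'
      · exact ⟨1, by simp [hτapp, swap_apply_of_ne_of_ne h1 h2]⟩
  have hle : ∀ x y, σ.SameCycle x y → τ.SameCycle x y := fun x y => mono hstep
  -- reverse direction away from the cycles of a and b
  have hrev : ∀ x y, τ.SameCycle x y → ¬ σ.SameCycle x a → ¬ σ.SameCycle x b →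
      σ.SameCycle x y := by
    intro x y hxy hxa hxb
    obtain ⟨i, -, rfl⟩ := hxy.exists_pow_eq'
    clear hxy
    induction i with
    | zero => simpa using SameCycle.refl σ x
    | succ n ih =>
      set p := (τ ^ n) x with hp
      have hxp : σ.SameCycle x p := ih
      have hpσ : σ.SameCycle p (σ p) := ⟨1, by simp⟩
      have h1 : σ p ≠ a := fun e => hxa (hxp.trans (e ▸ hpσ))
      have h2 : σ p ≠ b := fun e => hxb (hxp.trans (e ▸ hpσ))
      have hs : (τ ^ (n + 1)) x = σ p := by
        rw [pow_succ', Perm.mul_apply, ← hp, hτapp, swap_apply_of_ne_of_ne h1 h2]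
      rw [hs]
      exact hxp.trans hpσ
  -- the bijection
  let φ : Quotient (scs σ) → Quotient (scs τ) :=
    Quotient.lift (fun x => Quotient.mk (scs τ) x)
      (fun x y hxy => Quotient.sound (hle x y hxy))
  let B : Quotient (scs σ) := Quotient.mk (scs σ) b
  let F : {q : Quotient (scs σ) // q ≠ B} → Quotient (scs τ) := fun q => φ q.1
  have hFbij : Function.Bijective F := by
    constructor
    · rintro ⟨q₁, h₁⟩ ⟨q₂, h₂⟩ hq
      induction q₁ using Quotient.ind with | _ x => ?_
      induction q₂ using Quotient.ind with | _ y => ?_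
      apply Subtype.ext
      apply Quotient.sound
      have hxy : τ.SameCycle x y := Quotient.exact hq
      have hxb : ¬ σ.SameCycle x b := fun e => h₁ (Quotient.sound e)
      have hyb : ¬ σ.SameCycle y b := fun e => h₂ (Quotient.sound e)
      by_cases hxa : σ.SameCycle x a
      · by_cases hya : σ.SameCycle y a
        · exact hxa.trans hya.symm
        · exact (hrev y x hxy.symm hya hyb).symm
      · exact hrev x y hxy hxa hxb
    · intro q
      induction q using Quotient.ind with | _ z => ?_
      by_cases hz : σ.SameCycle z b
      · refine ⟨⟨Quotient.mk (scs σ) a, fun e => h (Quotient.exact e)⟩, ?_⟩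
        exact Quotient.sound (hab'.trans (hle z b hz).symm)
      · exact ⟨⟨Quotient.mk (scs σ) z, fun e => hz (Quotient.exact e)⟩, rfl⟩
  have h1 : Nat.card (Quotient (scs τ)) = Nat.card {q : Quotient (scs σ) // q ≠ B} :=
    (Nat.card_eq_of_bijective F hFbij).symm
  have h2 : Nat.card (Quotient (scs σ))
      = Nat.card {q : Quotient (scs σ) // q = B}
        + Nat.card {q : Quotient (scs σ) // q ≠ B} := by
    rw [← Nat.card_sum]
    exact Nat.card_congr (Equiv.sumCompl (· = B)).symm
  have h3 : Nat.card {q : Quotient (scs σ) // q = B} = 1 := by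
    haveI : Unique {q : Quotient (scs σ) // q = B} :=
      ⟨⟨⟨B, rfl⟩⟩, fun q => Subtype.ext q.2⟩
    exact Nat.card_unique
  rw [h2, h3, ← h1, add_comm]




lemma cyclesOn_univ_eq {n : ℕ} (σ : Perm (Fin n)) :
    cyclesOn σ Finset.univ = Nat.card (Quotient (scs σ)) := by
  classical
  unfold cyclesOn
  rw [Finset.filter_true_of_mem (fun c _ => Finset.subset_univ _), card_quot]

lemma cyclesOn_split {n : ℕ} (σ : Perm (Fin n)) (S : Finset (Fin n))
    (h : ∀ x ∈ S, σ x ∈ S) :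
    cyclesOn σ S + cyclesOn σ Sᶜ = cyclesOn σ Finset.univ := by
  classical
  have hc : ∀ x ∈ Sᶜ, σ x ∈ Sᶜ := compl_invariant h
  have hdich : ∀ c ∈ σ.cycleFactorsFinset, c.support ⊆ S ∨ c.support ⊆ Sᶜ := by
    intro c hcm
    obtain ⟨hcyc, hsup⟩ := Equiv.Perm.mem_cycleFactorsFinset_iff.1 hcm
    obtain ⟨x, hx, -⟩ := hcyc
    have hxs : x ∈ c.support := Equiv.Perm.mem_support.2 hx
    have hcyOf : c = σ.cycleOf x := Equiv.Perm.cycle_is_cycleOf hxs hcm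
    have hsc : ∀ y ∈ c.support, σ.SameCycle x y := by
      intro y hy
      rw [hcyOf] at hy
      exact (Equiv.Perm.mem_support_cycleOf_iff.1 hy).1
    by_cases hxS : x ∈ S
    · exact Or.inl fun y hy => sc_invariant S h hxS (hsc y hy)
    · exact Or.inr fun y hy =>
        sc_invariant Sᶜ hc (Finset.mem_compl.2 hxS) (hsc y hy)
  have hne : ∀ c ∈ σ.cycleFactorsFinset, c.support.Nonempty := by
    intro c hcm
    obtain ⟨hcyc, -⟩ := Equiv.Perm.mem_cycleFactorsFinset_iff.1 hcm
    obtain ⟨x, hx, -⟩ := hcyc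
    exact ⟨x, Equiv.Perm.mem_support.2 hx⟩
  have h1 : (σ.cycleFactorsFinset.filter fun c => c.support ⊆ Sᶜ)
      = σ.cycleFactorsFinset.filter fun c => ¬ c.support ⊆ S := by
    apply Finset.filter_congr
    intro c hcm
    constructor
    · intro hsub hsubS
      obtain ⟨x, hx⟩ := hne c hcm
      exact Finset.mem_compl.1 (hsub hx) (hsubS hx)
    · intro hn
      rcases hdich c hcm with h' | h'
      · exact absurd h' hn
      · exact h'
  have hfac : (σ.cycleFactorsFinset.filter fun c => c.support ⊆ S).card
      + (σ.cycleFactorsFinset.filter fun c => c.support ⊆ Sᶜ).card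
      = σ.cycleFactorsFinset.card := by
    rw [h1]
    exact Finset.card_filter_add_card_filter_not (fun c : Equiv.Perm (Fin n) => c.support ⊆ S)
  have h2 : (Finset.univ.filter fun x : Fin n => σ x = x)
      = (S.filter fun x => σ x = x) ∪ (Sᶜ.filter fun x => σ x = x) := by
    rw [← Finset.filter_union, Finset.union_compl]
  have hfix : (S.filter fun x => σ x = x).card + (Sᶜ.filter fun x => σ x = x).card
      = (Finset.univ.filter fun x : Fin n => σ x = x).card := by
    rw [h2, Finset.card_union_of_disjoint
      (Finset.disjoint_filter_filter disjoint_compl_right)]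
  unfold cyclesOn
  rw [Finset.filter_true_of_mem (fun c _ => Finset.subset_univ _)]
  omega

end TwoBondAux

end Aux

/-- **2-bond flip for colored graphs.**
Let `G` be a connected `(d+1)`-colored graph and let `e, e'` be the color-0 edges at
the white vertices `w₁, w₂`.  Let `G'` be the graph obtained by flipping `e` with `e'`
(color-0 attachment composed with the swap of `w₁` and `w₂`).  If `{e, e'}` is a
2-bond (i.e. the flipped graph separates `w₁` from `w₂`), then `G'` consists of two
connected colored graphs `G_L` (vertices `S ∋ w₁`) and `G_R` (vertices `Sᶜ ∋ w₂`),
and the numbers of bicolored cycles through color 0 satisfy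
`C₀(G) = C₀(G_L) + C₀(G_R) − d` (written additively to avoid truncated subtraction). -/

theorem two_bond_flip (d n : ℕ) (π : Fin (d + 1) → Equiv.Perm (Fin n))
    (w₁ w₂ : Fin n) (hw : w₁ ≠ w₂)
    (hconn : ColConnected π)
    (π' : Fin (d + 1) → Equiv.Perm (Fin n))
    (hπ' : π' = fun c => if c = 0 then π 0 * Equiv.swap w₁ w₂ else π c)
    (hcut : ¬ ∃ g ∈ transGroup π', g w₁ = w₂) :
    ∃ S : Finset (Fin n), w₁ ∈ S ∧ w₂ ∉ S ∧
      ConnOn π' S ∧ ConnOn π' Sᶜ ∧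
      C0on π Finset.univ + d = C0on π' S + C0on π' Sᶜ := by
  classical
  have hπ'0 : π' 0 = π 0 * Equiv.swap w₁ w₂ := by rw [hπ']; simp
  have hπ'c : ∀ c : Fin (d + 1), c ≠ 0 → π' c = π c := by
    intro c hc; rw [hπ']; simp [hc]
  have hgen : ∀ a b : Fin (d + 1), cTrans π' a b ∈ transGroup π' :=
    fun a b => Subgroup.subset_closure ⟨(a, b), rfl⟩
  have hct : ∀ c : Fin (d + 1), c ≠ 0 →
      cTrans π' 0 c = Equiv.swap w₁ w₂ * cTrans π 0 c := by
    intro c hc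
    rw [cTrans, cTrans, hπ'0, hπ'c c hc, mul_inv_rev, Equiv.swap_inv, mul_assoc]
  -- the predicate: reachable from w₁ or w₂ in the flipped graph
  set P : Fin n → Prop :=
    fun p => (∃ g ∈ transGroup π', g w₁ = p) ∨ (∃ g ∈ transGroup π', g w₂ = p)
    with hPdef
  have hPH : ∀ h ∈ transGroup π', ∀ p, P p → P (h p) := by
    rintro h hh p (⟨g, hg, rfl⟩ | ⟨g, hg, rfl⟩)
    · exact Or.inl ⟨h * g, mul_mem hh hg, rfl⟩
    · exact Or.inr ⟨h * g, mul_mem hh hg, rfl⟩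
  have hPsw : ∀ p, P p → P (Equiv.swap w₁ w₂ p) := by
    intro p hp
    by_cases h1 : p = w₁
    · subst h1
      rw [Equiv.swap_apply_left]
      exact Or.inr ⟨1, one_mem _, rfl⟩
    · by_cases h2 : p = w₂
      · subst h2
        rw [Equiv.swap_apply_right]
        exact Or.inl ⟨1, one_mem _, rfl⟩
      · rw [Equiv.swap_apply_of_ne_of_ne h1 h2]
        exact hp
  let K : Subgroup (Equiv.Perm (Fin n)) :=
    { carrier := {g | ∀ p, (P p → P (g p)) ∧ (P p → P (g⁻¹ p))}
      one_mem' := fun p => ⟨fun hp => by simpa using hp, fun hp => by simpa using hp⟩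
      mul_mem' := by
        intro g h hg hh
        intro p
        refine ⟨fun hp => ?_, fun hp => ?_⟩
        · simpa [Equiv.Perm.mul_apply] using (hg (h p)).1 ((hh p).1 hp)
        · simpa [mul_inv_rev, Equiv.Perm.mul_apply] using (hh (g⁻¹ p)).2 ((hg p).2 hp)
      inv_mem' := by
        intro g hg
        intro p
        exact ⟨(hg p).2, fun hp => by simpa using (hg p).1 hp⟩ }
  have hHK : ∀ h ∈ transGroup π', h ∈ K :=
    fun h hh p => ⟨hPH h hh p, hPH h⁻¹ (inv_mem hh) p⟩
  have hswK : Equiv.swap w₁ w₂ ∈ K :=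
    fun p => ⟨hPsw p, fun hp => by simpa [Equiv.swap_inv] using hPsw p hp⟩
  have hgenK : ∀ a b : Fin (d + 1), cTrans π a b ∈ K := by
    intro a b
    by_cases ha : a = 0 <;> by_cases hb : b = 0
    · subst ha; subst hb
      have h1 : cTrans π 0 0 = 1 := inv_mul_cancel _
      rw [h1]; exact one_mem K
    · subst ha
      have h1 : cTrans π 0 b = Equiv.swap w₁ w₂ * cTrans π' 0 b := by
        rw [hct b hb, ← mul_assoc, Equiv.swap_mul_self, one_mul]
      rw [h1]
      exact mul_mem hswK (hHK _ (hgen 0 b))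
    · subst hb
      have h1 : cTrans π a 0 = cTrans π' a 0 * Equiv.swap w₁ w₂ := by
        rw [cTrans, cTrans, hπ'c a ha, hπ'0, mul_assoc, mul_assoc,
          Equiv.swap_mul_self, mul_one]
      rw [h1]
      exact mul_mem (hHK _ (hgen a 0)) hswK
    · have h1 : cTrans π a b = cTrans π' a b := by
        rw [cTrans, cTrans, hπ'c a ha, hπ'c b hb]
      rw [h1]
      exact hHK _ (hgen a b)
  have hKclosure : transGroup π ≤ K := by
    rw [transGroup, Subgroup.closure_le]
    rintro g ⟨⟨a, b⟩, rfl⟩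
    exact hgenK a b
  have hPall : ∀ x, P x := by
    intro x
    obtain ⟨-, -, hconn3⟩ := hconn
    obtain ⟨g, hg, hgx⟩ := hconn3 w₁ (Finset.mem_univ _) x (Finset.mem_univ _)
    have hgK : ∀ p, (P p → P (g p)) ∧ (P p → P (g⁻¹ p)) := hKclosure hg
    have hw1 : P w₁ := Or.inl ⟨1, one_mem _, rfl⟩
    have := (hgK w₁).1 hw1
    rwa [hgx] at this
  -- the vertex set of the left part
  set S : Finset (Fin n) :=
    Finset.univ.filter (fun x => ∃ g ∈ transGroup π', g w₁ = x) with hS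
  have hmemS : ∀ x, x ∈ S ↔ ∃ g ∈ transGroup π', g w₁ = x := by
    intro x; simp [hS]
  have hw₁S : w₁ ∈ S := (hmemS w₁).2 ⟨1, one_mem _, rfl⟩
  have hw₂S : w₂ ∉ S := fun h => hcut ((hmemS w₂).1 h)
  have hinvS : ∀ a b : Fin (d + 1), ∀ x ∈ S, cTrans π' a b x ∈ S := by
    intro a b x hx
    obtain ⟨g, hg, rfl⟩ := (hmemS x).1 hx
    exact (hmemS _).2 ⟨cTrans π' a b * g, mul_mem (hgen a b) hg, rfl⟩
  refine ⟨S, hw₁S, hw₂S, ?_, ?_, ?_⟩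
  · refine ⟨⟨w₁, hw₁S⟩, hinvS, ?_⟩
    intro x hx y hy
    obtain ⟨g, hg, rfl⟩ := (hmemS x).1 hx
    obtain ⟨g', hg', rfl⟩ := (hmemS y).1 hy
    exact ⟨g' * g⁻¹, mul_mem hg' (inv_mem hg), by simp [Equiv.Perm.mul_apply]⟩
  · refine ⟨⟨w₂, Finset.mem_compl.2 hw₂S⟩, ?_, ?_⟩
    · intro a b x hx
      rw [Finset.mem_compl] at hx ⊢
      intro hmem
      obtain ⟨g, hg, hgx⟩ := (hmemS _).1 hmem
      refine hx ((hmemS x).2 ⟨(cTrans π' a b)⁻¹ * g,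
        mul_mem (inv_mem (hgen a b)) hg, ?_⟩)
      rw [Equiv.Perm.mul_apply, hgx]
      simp
    · intro x hx y hy
      rw [Finset.mem_compl] at hx hy
      have hx2 : ∃ g ∈ transGroup π', g w₂ = x := by
        rcases hPall x with h' | h'
        · exact absurd ((hmemS x).2 h') hx
        · exact h'
      have hy2 : ∃ g ∈ transGroup π', g w₂ = y := by
        rcases hPall y with h' | h'
        · exact absurd ((hmemS y).2 h') hy
        · exact h'
      obtain ⟨g, hg, rfl⟩ := hx2
      obtain ⟨g', hg', rfl⟩ := hy2
      exact ⟨g' * g⁻¹, mul_mem hg' (inv_mem hg), by simp [Equiv.Perm.mul_apply]⟩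
  · -- the cycle count
    have hcount : ∀ c : Fin (d + 1), c ≠ 0 →
        cyclesOn (cTrans π' 0 c) S + cyclesOn (cTrans π' 0 c) Sᶜ
          = cyclesOn (cTrans π 0 c) Finset.univ + 1 := by
      intro c hc
      rw [TwoBondAux.cyclesOn_split _ _ (hinvS 0 c), TwoBondAux.cyclesOn_univ_eq,
        TwoBondAux.cyclesOn_univ_eq]
      have hnc : ¬ (cTrans π' 0 c).SameCycle w₁ w₂ := by
        rintro ⟨i, hi⟩
        exact hcut ⟨(cTrans π' 0 c) ^ i, zpow_mem (hgen 0 c) i, hi⟩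
      have hmain := TwoBondAux.card_quot_swap_mul (cTrans π' 0 c) w₁ w₂ hw hnc
      have hrw : Equiv.swap w₁ w₂ * cTrans π' 0 c = cTrans π 0 c := by
        rw [hct c hc, ← mul_assoc, Equiv.swap_mul_self, one_mul]
      rw [hmain, hrw]
    have hcard : (Finset.univ.filter fun c : Fin (d + 1) => c ≠ 0).card = d := by
      rw [Finset.filter_ne', Finset.card_erase_of_mem (Finset.mem_univ _)]
      simp
    calc C0on π Finset.univ + d
        = ∑ c ∈ Finset.univ.filter fun c : Fin (d + 1) => c ≠ 0,
            (cyclesOn (cTrans π 0 c) Finset.univ + 1) := by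
          rw [Finset.sum_add_distrib, Finset.sum_const, smul_eq_mul, mul_one, hcard]
          rfl
      _ = ∑ c ∈ Finset.univ.filter fun c : Fin (d + 1) => c ≠ 0,
            (cyclesOn (cTrans π' 0 c) S + cyclesOn (cTrans π' 0 c) Sᶜ) := by
          refine Finset.sum_congr rfl fun c hc => ?_
          exact (hcount c (Finset.mem_filter.1 hc).2).symm
      _ = C0on π' S + C0on π' Sᶜ := by
          rw [Finset.sum_add_distrib]
          rfl
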